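/- Let G be a connected finite simple graph. Then β(G) is a simple root of the independence polynomial I(G,z), and every complex root ρ of I(G,z) with ρ ≠ β(G) satisfies |ρ| > β(G). -/

import Mathlib

open Polynomial

open scoped Classical in
/-- `indPolyOn G A` is the independence polynomial (over `ℝ`) of the subgraph of `G`
induced on the vertex set `A`: the sum of `(-1)^|s| • X^|s|` over all independent
sets `s ⊆ A` of `G`.  Equivalently it is `∑ k (-1)^k a_k z^k` where `a_k` is the
number of independent sets of size `k` of the induced subgraph `G[A]`. -/
noncomputable def indPolyOn {V : Type*} [Fintype V] (G : SimpleGraph V) (A : Set V) :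
    Polynomial ℝ :=
  ∑ s ∈ Finset.univ.filter
      (fun s : Finset V => ↑s ⊆ A ∧ ∀ u ∈ s, ∀ v ∈ s, ¬ G.Adj u v),
    ((-1 : ℝ) ^ s.card) • (X : Polynomial ℝ) ^ s.card

/-- The independence polynomial `I(G,z)` of `G`. -/
noncomputable def indPoly {V : Type*} [Fintype V] (G : SimpleGraph V) : Polynomial ℝ :=
  indPolyOn G Set.univ

namespace IndProof

open Filter
open scoped Classical Topology

variable {V : Type*} [Fintype V] (G : SimpleGraph V)

def Ind (G : SimpleGraph V) (s : Finset V) : Prop := ∀ u ∈ s, ∀ v ∈ s, ¬ G.Adj u v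

open scoped Classical in
noncomputable def q (A : Finset V) : Polynomial ℝ :=
  ∑ s ∈ Finset.univ.filter (fun s : Finset V => s ⊆ A ∧ Ind G s),
    ((-1 : ℝ) ^ s.card) • (X : Polynomial ℝ) ^ s.card

lemma q_eq_indPolyOn (A : Finset V) : q G A = indPolyOn G ↑A := by
  unfold q indPolyOn
  apply Finset.sum_congr _ (fun _ _ => rfl)
  apply Finset.filter_congr
  intro s _
  simp [Ind, Finset.coe_subset]

lemma q_univ : q G Finset.univ = indPoly G := by
  rw [q_eq_indPolyOn, indPoly, Finset.coe_univ]

open scoped Classical in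
/-- `A` minus the closed neighborhood of `v`. -/
noncomputable def rem (A : Finset V) (v : V) : Finset V :=
  A.filter (fun u => ¬ G.Adj v u ∧ u ≠ v)

lemma rem_subset (A : Finset V) (v : V) : rem G A v ⊆ A := Finset.filter_subset _ _

lemma rem_subset_erase (A : Finset V) (v : V) : rem G A v ⊆ A.erase v := by
  intro u hu
  simp only [rem, Finset.mem_filter] at hu
  exact Finset.mem_erase.2 ⟨hu.2.2, hu.1⟩

lemma ind_insert {t : Finset V} {w : V} (hInd : Ind G t) (hnb : ∀ x ∈ t, ¬ G.Adj w x) :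
    Ind G (insert w t) := by
  intro a ha b hb hadj
  simp only [Finset.mem_insert] at ha hb
  obtain rfl | ha := ha
  · obtain rfl | hb := hb
    · exact G.loopless.irrefl _ hadj
    · exact hnb _ hb hadj
  · obtain rfl | hb := hb
    · exact hnb _ ha hadj.symm
    · exact hInd _ ha _ hb hadj

lemma q_empty : q G ∅ = 1 := by
  classical
  rw [q]
  rw [show Finset.univ.filter (fun s : Finset V => s ⊆ (∅ : Finset V) ∧ Ind G s) = {∅} by
    ext s
    simp only [Finset.mem_filter, Finset.mem_univ, true_and, Finset.mem_singleton,
      Finset.subset_empty]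
    exact ⟨fun h => h.1, fun h => ⟨h, by simp [h, Ind]⟩⟩]
  simp

lemma q_rec {A : Finset V} {v : V} (hv : v ∈ A) :
    q G A = q G (A.erase v) - X * q G (rem G A v) := by
  classical
  have hsplit := Finset.sum_filter_add_sum_filter_not
    (Finset.univ.filter (fun s : Finset V => s ⊆ A ∧ Ind G s)) (fun s => v ∈ s)
    (fun s : Finset V => ((-1 : ℝ) ^ s.card) • (X : Polynomial ℝ) ^ s.card)
  rw [q, ← hsplit]
  have h2 : ∑ s ∈ (Finset.univ.filter (fun s : Finset V => s ⊆ A ∧ Ind G s)).filter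
      (fun s => v ∉ s), ((-1 : ℝ) ^ s.card) • (X : Polynomial ℝ) ^ s.card
      = q G (A.erase v) := by
    rw [q]
    apply Finset.sum_congr _ (fun _ _ => rfl)
    rw [Finset.filter_filter]
    apply Finset.filter_congr
    intro s _
    constructor
    · rintro ⟨⟨h1, h2⟩, h3⟩
      exact ⟨Finset.subset_erase.2 ⟨h1, h3⟩, h2⟩
    · rintro ⟨h1, h2⟩
      have := Finset.subset_erase.1 h1
      exact ⟨⟨this.1, h2⟩, this.2⟩
  have h1 : ∑ s ∈ (Finset.univ.filter (fun s : Finset V => s ⊆ A ∧ Ind G s)).filter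
      (fun s => v ∈ s), ((-1 : ℝ) ^ s.card) • (X : Polynomial ℝ) ^ s.card
      = -(X * q G (rem G A v)) := by
    rw [q, Finset.mul_sum, ← Finset.sum_neg_distrib]
    refine Finset.sum_bij' (fun s _ => s.erase v) (fun t _ => insert v t) ?hi ?hj ?left ?right ?h
    case hi =>
      intro s hs
      simp only [Finset.mem_filter, Finset.mem_univ, true_and] at hs ⊢
      obtain ⟨⟨hsA, hInd⟩, hvs⟩ := hs
      refine ⟨?_, ?_⟩
      · intro u hu
        have hu' := Finset.mem_erase.1 hu
        simp only [rem, Finset.mem_filter]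
        exact ⟨hsA hu'.2, hInd v hvs u hu'.2, hu'.1⟩
      · intro a ha b hb
        exact hInd a (Finset.mem_of_mem_erase ha) b (Finset.mem_of_mem_erase hb)
    case hj =>
      intro t ht
      simp only [Finset.mem_filter, Finset.mem_univ, true_and] at ht ⊢
      obtain ⟨htr, hInd⟩ := ht
      refine ⟨⟨?_, ?_⟩, Finset.mem_insert_self _ _⟩
      · intro u hu
        rcases Finset.mem_insert.1 hu with rfl | hu
        · exact hv
        · exact rem_subset G A v (htr hu)
      · exact ind_insert G hInd (fun x hx => (Finset.mem_filter.1 (htr hx)).2.1)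
    case left =>
      intro s hs
      simp only [Finset.mem_filter] at hs
      exact Finset.insert_erase hs.2
    case right =>
      intro t ht
      simp only [Finset.mem_filter, Finset.mem_univ, true_and] at ht
      have hvnt : v ∉ t := fun h => by
        have := ht.1 h
        simp [rem] at this
      exact Finset.erase_insert hvnt
    case h =>
      intro s hs
      simp only [Finset.mem_filter] at hs
      have h1 : 1 ≤ s.card := Finset.card_pos.2 ⟨v, hs.2⟩
      have hcard : s.card = (s.erase v).card + 1 := by
        rw [Finset.card_erase_of_mem hs.2]
        omega
      rw [hcard, smul_eq_C_mul, smul_eq_C_mul, pow_succ, pow_succ, map_mul]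
      simp only [map_neg, map_one]
      ring
  rw [h1, h2]
  ring

lemma eval_q (A : Finset V) (x : ℝ) :
    (q G A).eval x
      = ∑ s ∈ Finset.univ.filter (fun s : Finset V => s ⊆ A ∧ Ind G s), (-x) ^ s.card := by
  rw [q, eval_finset_sum]
  apply Finset.sum_congr rfl
  intro s _
  rw [eval_smul, eval_pow, eval_X, smul_eq_mul, ← neg_one_mul x, mul_pow]

lemma one_le_eval_q_nonpos (A : Finset V) {x : ℝ} (hx : x ≤ 0) : 1 ≤ (q G A).eval x := by
  classical
  rw [eval_q]
  have h0 : (∅ : Finset V) ∈ Finset.univ.filter (fun s : Finset V => s ⊆ A ∧ Ind G s) := by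
    exact Finset.mem_filter.2 ⟨Finset.mem_univ _, Finset.empty_subset _, by simp [Ind]⟩
  have := Finset.single_le_sum (f := fun s : Finset V => (-x) ^ s.card)
    (fun s _ => pow_nonneg (by linarith) _) h0
  simpa using this

lemma q_ne_zero (A : Finset V) : q G A ≠ 0 := by
  intro h
  have := one_le_eval_q_nonpos G A (le_refl (0:ℝ))
  rw [h] at this
  norm_num at this

lemma eval_q_rec {A : Finset V} {v : V} (hv : v ∈ A) (x : ℝ) :
    (q G A).eval x = (q G (A.erase v)).eval x - x * (q G (rem G A v)).eval x := by
  rw [q_rec G hv]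
  simp

section Beta

variable {G} {β : ℝ}
variable (hroot' : (q G Finset.univ).eval β = 0)
variable (hmin' : ∀ x : ℝ, (q G Finset.univ).eval x = 0 → β ≤ x)

include hroot' in
lemma beta_pos : 0 < β := by
  by_contra h
  push_neg at h
  have := one_le_eval_q_nonpos G Finset.univ h
  rw [hroot'] at this
  linarith

include hroot' hmin' in
lemma key_pos :
    (∀ A : Finset V, ∀ x : ℝ, 0 ≤ x → x < β → 0 < (q G A).eval x) ∧
      (∀ A : Finset V, 0 ≤ (q G A).eval β) := by
  classical
  set T : Set ℝ := {x | 0 < x ∧ ∃ A : Finset V, (q G A).eval x = 0} with hT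
  have hTfin : T.Finite := by
    apply Set.Finite.subset
      (Set.finite_iUnion (fun A : Finset V => Polynomial.finite_setOf_isRoot (q_ne_zero G A)))
    rintro x ⟨-, A, hA⟩
    exact Set.mem_iUnion.2 ⟨A, hA⟩
  have hβpos : 0 < β := beta_pos hroot'
  have hβT : β ∈ T := ⟨hβpos, Finset.univ, hroot'⟩
  have hne : hTfin.toFinset.Nonempty := ⟨β, hTfin.mem_toFinset.2 hβT⟩
  set c : ℝ := hTfin.toFinset.min' hne with hc
  have hcmem : c ∈ T := hTfin.mem_toFinset.1 (hTfin.toFinset.min'_mem hne)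
  have hcle : ∀ y ∈ T, c ≤ y := fun y hy => hTfin.toFinset.min'_le y (hTfin.mem_toFinset.2 hy)
  have hc0 : 0 < c := hcmem.1
  have heval0 : ∀ A : Finset V, 1 ≤ (q G A).eval 0 := fun A =>
    one_le_eval_q_nonpos G A (le_refl 0)
  -- positivity below c
  have pos_lt_c : ∀ (A : Finset V) (x : ℝ), 0 ≤ x → x < c → 0 < (q G A).eval x := by
    intro A x hx hxc
    by_contra hle
    push_neg at hle
    rcases eq_or_lt_of_le hle with heq | hlt
    · have hx0 : x ≠ 0 := by
        intro h; rw [h] at heq; have := heval0 A; linarith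
      have : x ∈ T := ⟨hx.lt_of_ne (Ne.symm hx0), A, heq⟩
      exact absurd (hcle x this) (not_le.2 hxc)
    · have hcont : ContinuousOn (fun y => (q G A).eval y) (Set.Icc 0 x) :=
        (q G A).continuousOn
      have h0x : (0:ℝ) ≤ x := hx
      have hIVT := intermediate_value_Icc' h0x hcont
      have hmem : (0:ℝ) ∈ Set.Icc ((q G A).eval x) ((q G A).eval 0) :=
        ⟨le_of_lt hlt, by linarith [heval0 A]⟩
      obtain ⟨r, hrIcc, hr⟩ := hIVT hmem
      have hr0 : r ≠ 0 := by
        intro h; rw [h] at hr; have := heval0 A; linarith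
      have : r ∈ T := ⟨lt_of_le_of_ne hrIcc.1 (Ne.symm hr0), A, hr⟩
      have := hcle r this
      linarith [hrIcc.2]
  -- monotonicity below c
  have mono : ∀ (n : ℕ) (A B : Finset V), A.card ≤ n → B ⊆ A → ∀ x : ℝ, 0 ≤ x → x < c →
      (q G A).eval x ≤ (q G B).eval x := by
    intro n
    induction n with
    | zero =>
      intro A B hcard hBA x hx hxc
      have hA : A = ∅ := Finset.card_eq_zero.1 (Nat.le_zero.1 hcard)
      have hB : B = ∅ := Finset.subset_empty.1 (hA ▸ hBA)
      rw [hA, hB]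
    | succ n ih =>
      intro A B hcard hBA x hx hxc
      by_cases hAB : B = A
      · rw [hAB]
      · obtain ⟨v, hvA, hvB⟩ := Finset.exists_of_ssubset (lt_of_le_of_ne hBA hAB)
        have h1 : (q G A).eval x ≤ (q G (A.erase v)).eval x := by
          rw [eval_q_rec G hvA x]
          have := pos_lt_c (rem G A v) x hx hxc
          nlinarith
        have h2 : (q G (A.erase v)).eval x ≤ (q G B).eval x := by
          apply ih (A.erase v) B _ (Finset.subset_erase.2 ⟨hBA, hvB⟩) x hx hxc
          have := Finset.card_erase_of_mem hvA
          omega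
        linarith
  -- c = β
  have hcβ : c ≤ β := hcle β hβT
  obtain ⟨-, A0, hA0⟩ := hcmem
  have hlim1 : (q G Finset.univ).eval c ≤ (q G A0).eval c := by
    have hnb : (𝓝[<] c).NeBot := inferInstance
    refine le_of_tendsto_of_tendsto
      ((q G Finset.univ).continuousWithinAt :
        Filter.Tendsto _ (𝓝[<] c) _)
      ((q G A0).continuousWithinAt :
        Filter.Tendsto _ (𝓝[<] c) _) ?_
    filter_upwards [Ioo_mem_nhdsLT_of_mem (Set.mem_Ioc.2 ⟨hc0, le_refl c⟩)] with y hy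
    exact mono (Finset.card Finset.univ) Finset.univ A0 (le_refl _) (Finset.subset_univ A0)
      y (le_of_lt hy.1) hy.2
  have hlim2 : 0 ≤ (q G Finset.univ).eval c := by
    have hnb : (𝓝[<] c).NeBot := inferInstance
    refine le_of_tendsto_of_tendsto (tendsto_const_nhds)
      ((q G Finset.univ).continuousWithinAt :
        Filter.Tendsto _ (𝓝[<] c) _) ?_
    filter_upwards [Ioo_mem_nhdsLT_of_mem (Set.mem_Ioc.2 ⟨hc0, le_refl c⟩)] with y hy
    exact le_of_lt (pos_lt_c Finset.univ y (le_of_lt hy.1) hy.2)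
  have hcroot : (q G Finset.univ).eval c = 0 := le_antisymm (hA0 ▸ hlim1) hlim2
  have hβc : β ≤ c := hmin' c hcroot
  have hceβ : c = β := le_antisymm hcβ hβc
  constructor
  · intro A x hx hxβ
    exact pos_lt_c A x hx (hceβ ▸ hxβ)
  · intro A
    by_contra hneg
    push_neg at hneg
    have hcont : ContinuousOn (fun y => (q G A).eval y) (Set.Icc 0 β) :=
      (q G A).continuousOn
    have hIVT := intermediate_value_Icc' (le_of_lt hβpos) hcont
    have hmem : (0:ℝ) ∈ Set.Icc ((q G A).eval β) ((q G A).eval 0) :=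
      ⟨le_of_lt hneg, by linarith [heval0 A]⟩
    obtain ⟨r, hrIcc, hr⟩ := hIVT hmem
    have hr0 : r ≠ 0 := by
      intro h; rw [h] at hr; have := heval0 A; linarith
    have hrβ : r ≠ β := by
      intro h; rw [h] at hr; linarith
    have : r ∈ T := ⟨lt_of_le_of_ne hrIcc.1 (Ne.symm hr0), A, hr⟩
    have := hcle r this
    have : β ≤ r := hceβ ▸ this
    exact hrβ (le_antisymm hrIcc.2 this)

end Beta

section Connected

variable {G} {β : ℝ}

lemma walk_cross {A : Finset V} :
    ∀ {b a : V}, G.Walk b a → b ∉ A → a ∈ A → ∃ v c, v ∉ A ∧ c ∈ A ∧ G.Adj v c := by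
  intro b a w
  induction w with
  | nil => intro h1 h2; exact absurd h2 h1
  | @cons x y zz h p ih =>
    intro hb ha
    by_cases hy : y ∈ A
    · exact ⟨x, y, hb, hy, h⟩
    · exact ih hy ha

lemma exists_crossing_edge (hG : G.Connected) {A : Finset V} (hne : A.Nonempty)
    (hprop : A ≠ Finset.univ) : ∃ v a, v ∉ A ∧ a ∈ A ∧ G.Adj v a := by
  obtain ⟨a, ha⟩ := hne
  obtain ⟨b, hb⟩ : ∃ b, b ∉ A := by
    by_contra h
    push_neg at h
    exact hprop (Finset.eq_univ_iff_forall.2 h)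
  obtain ⟨w⟩ := hG.preconnected b a
  exact walk_cross w hb ha

variable (hroot' : (q G Finset.univ).eval β = 0)
variable (hmin' : ∀ x : ℝ, (q G Finset.univ).eval x = 0 → β ≤ x)

include hroot' hmin' in
lemma eval_q_beta_pos (hG : G.Connected) :
    ∀ A : Finset V, A ≠ Finset.univ → 0 < (q G A).eval β := by
  classical
  obtain ⟨hpos, hnonneg⟩ := key_pos hroot' hmin'
  have hβ0 : 0 < β := beta_pos hroot'
  have main : ∀ n : ℕ, ∀ A : Finset V, A.card ≤ n → A ≠ Finset.univ → 0 < (q G A).eval β := by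
    intro n
    induction n with
    | zero =>
      intro A hA _
      have : A = ∅ := Finset.card_eq_zero.1 (Nat.le_zero.1 hA)
      rw [this, q_empty]
      norm_num
    | succ n ih =>
      intro A hA hAne
      rcases eq_or_lt_of_le (hnonneg A) with heq | hlt
      · exfalso
        have hAne' : A.Nonempty := by
          rcases Finset.eq_empty_or_nonempty A with h | h
          · rw [h, q_empty] at heq; norm_num at heq
          · exact h
        obtain ⟨v, a, hvA, haA, hadj⟩ := exists_crossing_edge hG hAne' hAne
        have herase : (insert v A).erase v = A := Finset.erase_insert hvA
        have hins := eval_q_rec G (Finset.mem_insert_self v A) β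
        rw [herase] at hins
        have hrem_eq : rem G (insert v A) v = rem G A v := by
          ext u
          simp only [rem, Finset.mem_filter, Finset.mem_insert]
          constructor
          · rintro ⟨h1 | h1, h2, h3⟩
            · exact absurd h1 h3
            · exact ⟨h1, h2, h3⟩
          · rintro ⟨h1, h2, h3⟩
            exact ⟨Or.inr h1, h2, h3⟩
        rw [hrem_eq] at hins
        have h1 : 0 ≤ (q G (insert v A)).eval β := hnonneg _
        have h2 : 0 ≤ (q G (rem G A v)).eval β := hnonneg _
        have hremss : rem G A v ⊂ A := by
          refine ⟨rem_subset G A v, fun hsub => ?_⟩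
          have := hsub haA
          simp only [rem, Finset.mem_filter] at this
          exact this.2.1 hadj
        have hremcard : (rem G A v).card < A.card := Finset.card_lt_card hremss
        have hremne : rem G A v ≠ Finset.univ := by
          intro h
          exact hAne (Finset.univ_subset_iff.1 (h ▸ rem_subset G A v))
        have hpos' := ih (rem G A v) (by omega) hremne
        have hzero : (q G (rem G A v)).eval β = 0 := by nlinarith
        linarith
      · exact hlt
  intro A
  exact main A.card A (le_refl _) 

end Connected

section Derivative

lemma derivative_q (A : Finset V) :
    derivative (q G A) = -∑ v ∈ A, q G (rem G A v) := by
  classical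
  rw [q, map_sum]
  have hterm : ∀ s : Finset V, derivative ((((-1:ℝ)) ^ s.card) • (X:Polynomial ℝ) ^ s.card)
      = ∑ _v ∈ s, (((-1:ℝ)) ^ s.card) • (X:Polynomial ℝ) ^ (s.card - 1) := by
    intro s
    rw [derivative_smul, derivative_X_pow, Finset.sum_const, smul_eq_C_mul, smul_eq_C_mul,
      nsmul_eq_mul, Polynomial.C_eq_natCast]
    ring
  rw [Finset.sum_congr rfl (fun s _ => hterm s)]
  have hrhs : -∑ v ∈ A, q G (rem G A v)
      = ∑ v ∈ A, ∑ t ∈ Finset.univ.filter (fun t : Finset V => t ⊆ rem G A v ∧ Ind G t),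
          -((((-1:ℝ)) ^ t.card) • (X:Polynomial ℝ) ^ t.card) := by
    rw [← Finset.sum_neg_distrib]
    apply Finset.sum_congr rfl
    intro v _
    rw [q, ← Finset.sum_neg_distrib]
  rw [hrhs, Finset.sum_sigma', Finset.sum_sigma']
  refine Finset.sum_bij' (fun p _ => ⟨p.2, p.1.erase p.2⟩) (fun p _ => ⟨insert p.1 p.2, p.1⟩)
    ?hi ?hj ?left ?right ?h
  case hi =>
    rintro ⟨s, v⟩ hp
    simp only [Finset.mem_sigma, Finset.mem_filter, Finset.mem_univ, true_and] at hp ⊢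
    obtain ⟨⟨hsA, hInd⟩, hvs⟩ := hp
    refine ⟨hsA hvs, ?_, ?_⟩
    · intro u hu
      have hu' := Finset.mem_erase.1 hu
      simp only [rem, Finset.mem_filter]
      exact ⟨hsA hu'.2, hInd v hvs u hu'.2, hu'.1⟩
    · intro a ha b hb
      exact hInd a (Finset.mem_of_mem_erase ha) b (Finset.mem_of_mem_erase hb)
  case hj =>
    rintro ⟨v, t⟩ hp
    simp only [Finset.mem_sigma, Finset.mem_filter, Finset.mem_univ, true_and] at hp ⊢
    obtain ⟨hvA, htr, hInd⟩ := hp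
    refine ⟨⟨?_, ?_⟩, Finset.mem_insert_self _ _⟩
    · intro u hu
      rcases Finset.mem_insert.1 hu with rfl | hu
      · exact hvA
      · exact rem_subset G A v (htr hu)
    · exact ind_insert G hInd (fun x hx => (Finset.mem_filter.1 (htr hx)).2.1)
  case left =>
    rintro ⟨s, v⟩ hp
    simp only [Finset.mem_sigma, Finset.mem_filter] at hp
    have : insert v (s.erase v) = s := Finset.insert_erase hp.2
    simp [this]
  case right =>
    rintro ⟨v, t⟩ hp
    simp only [Finset.mem_sigma, Finset.mem_filter, Finset.mem_univ, true_and] at hp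
    have hvnt : v ∉ t := fun h => by
      have := hp.2.1 h
      simp [rem] at this
    simp [Finset.erase_insert hvnt]
  case h =>
    rintro ⟨s, v⟩ hp
    simp only [Finset.mem_sigma, Finset.mem_filter] at hp
    have h1 : 1 ≤ s.card := Finset.card_pos.2 ⟨v, hp.2⟩
    have hcard : s.card = (s.erase v).card + 1 := by
      rw [Finset.card_erase_of_mem hp.2]
      omega
    simp only [hcard, Nat.add_sub_cancel]
    rw [smul_eq_C_mul, smul_eq_C_mul, pow_succ, map_mul]
    simp only [map_neg, map_one]
    ring

variable {G} {β : ℝ}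
variable (hroot' : (q G Finset.univ).eval β = 0)
variable (hmin' : ∀ x : ℝ, (q G Finset.univ).eval x = 0 → β ≤ x)

include hroot' hmin' in
lemma deriv_neg (hG : G.Connected) : (derivative (q G Finset.univ)).eval β < 0 := by
  classical
  rw [derivative_q, eval_neg, eval_finset_sum]
  have hpos : ∀ v ∈ (Finset.univ : Finset V),
      0 < (q G (rem G Finset.univ v)).eval β := by
    intro v _
    refine eval_q_beta_pos hroot' hmin' hG _ ?_
    intro h
    have : v ∈ rem G Finset.univ v := by rw [h]; exact Finset.mem_univ v
    simp [rem] at this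
  have hne : (Finset.univ : Finset V).Nonempty := by
    have : Nonempty V := hG.nonempty
    exact Finset.univ_nonempty
  have := Finset.sum_pos hpos hne
  linarith

include hroot' hmin' in
lemma mult_one (hG : G.Connected) : (q G Finset.univ).rootMultiplicity β = 1 := by
  have hne := q_ne_zero G Finset.univ
  have h1 : 0 < (q G Finset.univ).rootMultiplicity β :=
    (Polynomial.rootMultiplicity_pos hne).2 hroot'
  have hd : (derivative (q G Finset.univ)).eval β ≠ 0 :=
    ne_of_lt (deriv_neg hroot' hmin' hG)
  by_contra h
  have h2 : 2 ≤ (q G Finset.univ).rootMultiplicity β := by omega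
  have hdm := Polynomial.derivative_rootMultiplicity_of_root (p := q G Finset.univ) (t := β) hroot'
  have hdne : derivative (q G Finset.univ) ≠ 0 := by
    intro hh
    rw [hh] at hd
    simp at hd
  have hpos' : 0 < (derivative (q G Finset.univ)).rootMultiplicity β := by
    rw [hdm]; omega
  exact hd ((Polynomial.rootMultiplicity_pos hdne).1 hpos')

end Derivative

section ComplexPart

lemma erase_ne_univ {A : Finset V} {v : V} : A.erase v ≠ Finset.univ := by
  intro h
  have : v ∈ A.erase v := by rw [h]; exact Finset.mem_univ v
  exact (Finset.notMem_erase v A) this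

lemma ne_univ_of_subset {A B : Finset V} (h : A ⊆ B) (hB : B ≠ Finset.univ) :
    A ≠ Finset.univ := by
  intro hA
  exact hB (Finset.univ_subset_iff.1 (hA ▸ h))

lemma abs_one_sub_gt {β : ℝ} {z : ℂ} (hz : ‖z‖ ≤ β) (hne : z ≠ (β:ℂ)) :
    1 - β < ‖1 - z‖ := by
  by_contra h
  push_neg at h
  have h1 : (1:ℝ) ≤ ‖1 - z‖ + ‖z‖ := by
    have := norm_add_le (1 - z) z
    simpa using this
  have hzb : ‖z‖ = β := le_antisymm hz (by linarith)
  have hb0 : 0 ≤ 1 - β := le_trans (norm_nonneg _) h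
  have hsq : ‖1 - z‖ ^ 2 ≤ (1 - β)^2 := by
    nlinarith [norm_nonneg (1-z)]
  rw [Complex.sq_norm] at hsq
  have hns : Complex.normSq (1 - z) = 1 - 2*z.re + Complex.normSq z := by
    simp [Complex.normSq_apply, Complex.sub_re, Complex.sub_im, Complex.one_re, Complex.one_im]
    ring
  have hnz : Complex.normSq z = β^2 := by rw [← Complex.sq_norm, hzb]
  have hre : β ≤ z.re := by
    rw [hns, hnz] at hsq
    nlinarith
  have hre' : z.re ≤ β := hzb ▸ Complex.re_le_norm z
  have hreβ : z.re = β := le_antisymm hre' hre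
  have him : z.im = 0 := by
    have h2 : z.re * z.re + z.im * z.im = β^2 := by
      rw [← Complex.normSq_apply, hnz]
    have : z.im * z.im = 0 := by nlinarith
    nlinarith [this]
  apply hne
  apply Complex.ext
  · simp [hreβ]
  · simp [him]

variable {G} {β : ℝ}
variable (hroot' : (q G Finset.univ).eval β = 0)
variable (hmin' : ∀ x : ℝ, (q G Finset.univ).eval x = 0 → β ≤ x)

include hroot' hmin' in
lemma complex_main (hG : G.Connected) {z : ℂ} (hz : ‖z‖ ≤ β) (hzne : z ≠ (β:ℂ)) :
    ∀ A : Finset V, Polynomial.aeval z (q G A) ≠ 0 := by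
  classical
  have hβ0 : 0 < β := beta_pos hroot'
  obtain ⟨-, hnonneg⟩ := key_pos hroot' hmin'
  have hppos : ∀ A : Finset V, A ≠ Finset.univ → 0 < (q G A).eval β :=
    eval_q_beta_pos hroot' hmin' hG
  have cerec : ∀ {A : Finset V} {v : V}, v ∈ A →
      Polynomial.aeval z (q G A)
        = Polynomial.aeval z (q G (A.erase v)) - z * Polynomial.aeval z (q G (rem G A v)) := by
    intro A v hv
    rw [q_rec G hv]
    simp
  have main : ∀ n : ℕ, ∀ A : Finset V, A.card ≤ n →
      Polynomial.aeval z (q G A) ≠ 0 ∧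
        ∀ v ∈ A, (q G A).eval β * ‖Polynomial.aeval z (q G (A.erase v))‖
          < (q G (A.erase v)).eval β * ‖Polynomial.aeval z (q G A)‖ := by
    intro n
    induction n with
    | zero =>
      intro A hA
      have hAe : A = ∅ := Finset.card_eq_zero.1 (Nat.le_zero.1 hA)
      subst hAe
      constructor
      · rw [q_empty]
        simp
      · intro v hv
        exact absurd hv (Finset.notMem_empty v)
    | succ n ih =>
      intro A hA
      have chain : ∀ m (D K : Finset V), D.card ≤ n → K ⊆ D → D.card - K.card ≤ m →
          (q G D).eval β * ‖Polynomial.aeval z (q G K)‖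
            ≤ (q G K).eval β * ‖Polynomial.aeval z (q G D)‖ ∧
          (K ≠ D → (q G D).eval β * ‖Polynomial.aeval z (q G K)‖
            < (q G K).eval β * ‖Polynomial.aeval z (q G D)‖) := by
        intro m
        induction m with
        | zero =>
          intro D K hD hKD hm
          have hcards : D.card ≤ K.card := by
            have := Finset.card_le_card hKD
            omega
          have hKDeq : K = D := Finset.eq_of_subset_of_card_le hKD hcards
          subst hKDeq
          exact ⟨le_refl _, fun h => absurd rfl h⟩
        | succ m ihm =>
          intro D K hD hKD hm
          by_cases hKDeq : K = D
          · subst hKDeq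
            exact ⟨le_refl _, fun h => absurd rfl h⟩
          · obtain ⟨u, huD, huK⟩ := Finset.exists_of_ssubset (lt_of_le_of_ne hKD hKDeq)
            have hKD' : K ⊆ D.erase u := Finset.subset_erase.2 ⟨hKD, huK⟩
            have hcardD' : (D.erase u).card ≤ n := by
              have := Finset.card_erase_of_mem huD
              omega
            have hstep := (ih D hD).2 u huD
            have hcardK : K.card ≤ (D.erase u).card := Finset.card_le_card hKD'
            have hrecw := (ihm (D.erase u) K hcardD' hKD' (by
              have := Finset.card_erase_of_mem huD
              omega)).1
            have hD'prop : D.erase u ≠ Finset.univ := erase_ne_univ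
            have hD'pos : 0 < (q G (D.erase u)).eval β := hppos _ hD'prop
            have hKprop : K ≠ Finset.univ := ne_univ_of_subset hKD' hD'prop
            have hKpos : 0 < (q G K).eval β := hppos _ hKprop
            have hceD' : Polynomial.aeval z (q G (D.erase u)) ≠ 0 :=
              (ih (D.erase u) hcardD').1
            have hceK : Polynomial.aeval z (q G K) ≠ 0 :=
              (ih K (le_trans hcardK hcardD')).1
            have hceD : Polynomial.aeval z (q G D) ≠ 0 := (ih D hD).1
            have habsD' : 0 < ‖Polynomial.aeval z (q G (D.erase u))‖ :=
              norm_pos_iff.mpr hceD'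
            have habsK : 0 < ‖Polynomial.aeval z (q G K)‖ :=
              norm_pos_iff.mpr hceK
            have habsD : 0 < ‖Polynomial.aeval z (q G D)‖ :=
              norm_pos_iff.mpr hceD
            have hstrict : (q G D).eval β * ‖Polynomial.aeval z (q G K)‖
                < (q G K).eval β * ‖Polynomial.aeval z (q G D)‖ := by
              have h2 : (q G D).eval β * ‖Polynomial.aeval z (q G K)‖
                    * ‖Polynomial.aeval z (q G (D.erase u))‖
                  < (q G K).eval β * ‖Polynomial.aeval z (q G D)‖
                    * ‖Polynomial.aeval z (q G (D.erase u))‖ := by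
                nlinarith [mul_lt_mul_of_pos_right hstep habsK,
                  mul_le_mul_of_nonneg_right hrecw (le_of_lt habsD)]
              exact (mul_lt_mul_iff_left₀ habsD').1 h2
            exact ⟨le_of_lt hstrict, fun _ => hstrict⟩
      have hstepA : ∀ v ∈ A, (q G A).eval β * ‖Polynomial.aeval z (q G (A.erase v))‖
          < (q G (A.erase v)).eval β * ‖Polynomial.aeval z (q G A)‖ := by
        intro v hv
        have hKD : rem G A v ⊆ A.erase v := rem_subset_erase G A v
        have hDcard : (A.erase v).card ≤ n := by
          have := Finset.card_erase_of_mem hv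
          omega
        have hDprop : A.erase v ≠ Finset.univ := erase_ne_univ
        have hDpos : 0 < (q G (A.erase v)).eval β := hppos _ hDprop
        have hKcard : (rem G A v).card ≤ n := le_trans (Finset.card_le_card hKD) hDcard
        have hceD : Polynomial.aeval z (q G (A.erase v)) ≠ 0 := (ih _ hDcard).1
        have habsD : 0 < ‖Polynomial.aeval z (q G (A.erase v))‖ :=
          norm_pos_iff.mpr hceD
        have hrecA := cerec hv
        have herecA := eval_q_rec G hv β
        by_cases hKDeq : rem G A v = A.erase v
        · rw [hKDeq] at hrecA herecA
          have h1 : Polynomial.aeval z (q G A)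
              = (1 - z) * Polynomial.aeval z (q G (A.erase v)) := by
            rw [hrecA]; ring
          have h2 : (q G A).eval β = (1 - β) * (q G (A.erase v)).eval β := by
            rw [herecA]; ring
          rw [h1, h2, norm_mul]
          have habs := abs_one_sub_gt hz hzne
          nlinarith [mul_lt_mul_of_pos_right (mul_lt_mul_of_pos_right habs hDpos) habsD]
        · have hchain := (chain (A.erase v).card (A.erase v) (rem G A v) hDcard hKD
            (by omega)).2 hKDeq
          have htri : ‖Polynomial.aeval z (q G (A.erase v))‖
              - ‖z‖ * ‖Polynomial.aeval z (q G (rem G A v))‖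
              ≤ ‖Polynomial.aeval z (q G A)‖ := by
            have h := norm_sub_norm_le (Polynomial.aeval z (q G (A.erase v)))
              (z * Polynomial.aeval z (q G (rem G A v)))
            rw [norm_mul] at h
            rw [← hrecA] at h
            exact h
          have h3 : ‖z‖
                * ((q G (A.erase v)).eval β * ‖Polynomial.aeval z (q G (rem G A v))‖)
              < β * ((q G (rem G A v)).eval β
                * ‖Polynomial.aeval z (q G (A.erase v))‖) := by
            have hn1 : 0 ≤ (q G (A.erase v)).eval β
                * ‖Polynomial.aeval z (q G (rem G A v))‖ := by
              positivity
            calc ‖z‖ * ((q G (A.erase v)).eval β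
                  * ‖Polynomial.aeval z (q G (rem G A v))‖)
                ≤ β * ((q G (A.erase v)).eval β
                  * ‖Polynomial.aeval z (q G (rem G A v))‖) :=
                  mul_le_mul_of_nonneg_right hz hn1
              _ < β * ((q G (rem G A v)).eval β
                  * ‖Polynomial.aeval z (q G (A.erase v))‖) :=
                  (mul_lt_mul_iff_right₀ hβ0).2 hchain
          rw [herecA]
          nlinarith [mul_le_mul_of_nonneg_left htri (le_of_lt hDpos), h3]
      have hne0 : Polynomial.aeval z (q G A) ≠ 0 := by
        rcases Finset.eq_empty_or_nonempty A with rfl | ⟨v, hv⟩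
        · rw [q_empty]; simp
        · have h := hstepA v hv
          have hAnn : 0 ≤ (q G A).eval β := hnonneg A
          intro h0
          rw [h0] at h
          simp only [norm_zero, mul_zero] at h
          nlinarith [norm_nonneg (Polynomial.aeval z (q G (A.erase v))), hAnn]
      exact ⟨hne0, hstepA⟩
  intro A
  exact (main A.card A (le_refl _)).1

end ComplexPart

end IndProof

/-- For a connected finite simple graph `G`, the smallest real root
`β(G)` of the independence polynomial is a simple root, and every complex root
`ρ ≠ β(G)` satisfies `|ρ| > β(G)`. -/
theorem beta_simple_root_and_strictly_smallest {V : Type*} [Fintype V]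
    (G : SimpleGraph V) (hG : G.Connected)
    (β : ℝ) (hroot : (indPoly G).eval β = 0)
    (hmin : ∀ x : ℝ, (indPoly G).eval x = 0 → β ≤ x) :
    (indPoly G).rootMultiplicity β = 1 ∧
      ∀ ρ : ℂ, aeval ρ (indPoly G) = 0 → ρ ≠ (β : ℂ) → β < ‖ρ‖ := by
  classical
  have hq : IndProof.q G Finset.univ = indPoly G := IndProof.q_univ G
  have hroot' : (IndProof.q G Finset.univ).eval β = 0 := by rw [hq]; exact hroot
  have hmin' : ∀ x : ℝ, (IndProof.q G Finset.univ).eval x = 0 → β ≤ x := by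
    intro x hx
    exact hmin x (by rw [← hq]; exact hx)
  constructor
  · rw [← hq]
    exact IndProof.mult_one hroot' hmin' hG
  · intro ρ hρ hρne
    by_contra hle
    push_neg at hle
    have := IndProof.complex_main hroot' hmin' hG hle hρne Finset.univ
    rw [hq] at this
    exact this hρ
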